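/- Let R be a commutative ring. The space of semivaluations on R, i.e. the set of functions v : R → [0,+∞] satisfying v(ab) = v(a) + v(b), v(a+b) ≥ min(v(a), v(b)) for all a,b ∈ R, v(1) = 0 and v(0) = +∞, equipped with the topology of pointwise convergence, is a compact Hausdorff topological space. -/
import Mathlib


/-- A semivaluation on a commutative ring `R`: a function `v : R → [0,+∞]` with
`v (a*b) = v a + v b`, `v (a+b) ≥ min (v a) (v b)`, `v 1 = 0` and `v 0 = +∞`. -/
def IsSemival {R : Type*} [CommRing R] (v : R → ENNReal) : Prop :=
  (∀ a b : R, v (a * b) = v a + v b) ∧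
  (∀ a b : R, min (v a) (v b) ≤ v (a + b)) ∧
  v 1 = 0 ∧ v 0 = ⊤

lemma isClosed_isSemival {R : Type*} [CommRing R] :
    IsClosed {v : R → ENNReal | IsSemival v} := by
  have h1 : IsClosed {v : R → ENNReal | ∀ a b : R, v (a * b) = v a + v b} := by
    have : {v : R → ENNReal | ∀ a b : R, v (a * b) = v a + v b} =
        ⋂ (a : R) (b : R), {v : R → ENNReal | v (a * b) = v a + v b} := by
      ext v; simp [Set.mem_iInter]
    rw [this]
    refine isClosed_iInter fun a => isClosed_iInter fun b => ?_
    exact isClosed_eq (continuous_apply _) ((continuous_apply a).add (continuous_apply b))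
  have h2 : IsClosed {v : R → ENNReal | ∀ a b : R, min (v a) (v b) ≤ v (a + b)} := by
    have : {v : R → ENNReal | ∀ a b : R, min (v a) (v b) ≤ v (a + b)} =
        ⋂ (a : R) (b : R), {v : R → ENNReal | min (v a) (v b) ≤ v (a + b)} := by
      ext v; simp [Set.mem_iInter]
    rw [this]
    refine isClosed_iInter fun a => isClosed_iInter fun b => ?_
    exact isClosed_le ((continuous_apply a).min (continuous_apply b)) (continuous_apply _)
  have h3 : IsClosed {v : R → ENNReal | v 1 = 0} :=
    isClosed_eq (continuous_apply _) continuous_const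
  have h4 : IsClosed {v : R → ENNReal | v 0 = ⊤} :=
    isClosed_eq (continuous_apply _) continuous_const
  have : {v : R → ENNReal | IsSemival v} =
      ({v : R → ENNReal | ∀ a b : R, v (a * b) = v a + v b} ∩
        {v : R → ENNReal | ∀ a b : R, min (v a) (v b) ≤ v (a + b)} ∩
        {v : R → ENNReal | v 1 = 0} ∩ {v : R → ENNReal | v 0 = ⊤}) := by
    ext v
    simp only [IsSemival, Set.mem_setOf_eq, Set.mem_inter_iff]
    tauto
  rw [this]
  exact ((h1.inter h2).inter h3).inter h4

/-- The space of semivaluations on a commutative ring, with the topology of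
pointwise convergence (subspace of the product `∏_{a ∈ R} [0,+∞]`), is a
compact Hausdorff topological space. -/
theorem semivaluationSpace_compactSpace_and_t2Space (R : Type*) [CommRing R] :
    CompactSpace {v : R → ENNReal // IsSemival v} ∧
    T2Space {v : R → ENNReal // IsSemival v} := by
  constructor
  · exact isCompact_iff_compactSpace.mp (isClosed_isSemival.isCompact)
  · infer_instance
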